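/- Let q be a prime power, k ≥ 1, d ≥ 1 with q ≥ dk+1, and suppose k' ≥ k, d' ≥ d with q^2 ≥ d'k'+1. Consider the CFF incidence matrix C_{q,k,d} built from graphs of polynomials in F_q[x]_{≤k} restricted to dk+1 values, and C_{q^2,k',d'} built analogously over the extension field F_{q^2}, where F_q is viewed as a subfield of F_{q^2}. Then there exist row and column permutations of C_{q^2,k',d'} such that C_{q,k,d} appears as the top-left submatrix; i.e., the d-CFF((dk+1)q, q^{k+1}) embeds into the d'-CFF((d'k'+1)q^2, q^{2(k'+1)}). -/

import Mathlib

/-- Evaluation of the polynomial with coefficient vector `c` (degree at most `k`) at `x`. -/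
def polyEval {F : Type*} [CommSemiring F] {k : ℕ} (c : Fin (k + 1) → F) (x : F) : F :=
  ∑ i : Fin (k + 1), c i * x ^ (i : ℕ)

/-- A (Prop-valued) binary matrix `M` (rows `R`, columns `C`) is the incidence matrix of a
`d`-cover-free family: for every column `c₀` and every set `S` of at most `d` other columns,
some row has a one in `c₀` and zeros on all of `S`. -/
def MatCFF {R C : Type*} (d : ℕ) (M : R → C → Prop) : Prop :=
  ∀ c₀ : C, ∀ S : Finset C, c₀ ∉ S → S.card ≤ d →
    ∃ r, M r c₀ ∧ ∀ c ∈ S, ¬ M r c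

lemma agree_card_le {F : Type*} [Field F] [DecidableEq F] {k : ℕ} (c c₀ : Fin (k+1) → F)
    (hne : c ≠ c₀) {n : ℕ} (xs : Fin n ↪ F) :
    (Finset.univ.filter (fun i : Fin n => polyEval c (xs i) = polyEval c₀ (xs i))).card ≤ k := by
  classical
  set p : Polynomial F := ∑ j : Fin (k+1), Polynomial.monomial (j:ℕ) (c j - c₀ j) with hp
  obtain ⟨j, hj⟩ := Function.ne_iff.mp hne
  have hcoeff : p.coeff (j:ℕ) = c j - c₀ j := by
    rw [hp, Polynomial.finset_sum_coeff]
    simp only [Polynomial.coeff_monomial]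
    rw [Finset.sum_eq_single j]
    · simp
    · intro b _ hb
      rw [if_neg]
      exact fun h => hb (Fin.val_injective h)
    · simp
  have hp0 : p ≠ 0 := by
    intro h
    rw [h, Polynomial.coeff_zero] at hcoeff
    exact hj (sub_eq_zero.mp hcoeff.symm)
  have hdeg : p.natDegree ≤ k := by
    apply Polynomial.natDegree_sum_le_of_forall_le
    intro i _
    exact le_trans (Polynomial.natDegree_monomial_le _) (Nat.lt_succ_iff.mp i.isLt)
  have heval : ∀ x : F, p.eval x = polyEval c x - polyEval c₀ x := by
    intro x
    simp [hp, Polynomial.eval_finset_sum, polyEval, sub_mul, Finset.sum_sub_distrib]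
  calc (Finset.univ.filter (fun i : Fin n => polyEval c (xs i) = polyEval c₀ (xs i))).card
      = ((Finset.univ.filter (fun i : Fin n => polyEval c (xs i) = polyEval c₀ (xs i))).image xs).card :=
        (Finset.card_image_of_injective _ xs.injective).symm
    _ ≤ p.roots.toFinset.card := by
        apply Finset.card_le_card
        intro x hx
        simp only [Finset.mem_image, Finset.mem_filter] at hx
        obtain ⟨i, ⟨_, hi⟩, rfl⟩ := hx
        simp only [Multiset.mem_toFinset, Polynomial.mem_roots hp0]
        rw [Polynomial.IsRoot, heval, hi, sub_self]
    _ ≤ p.roots.card := Multiset.toFinset_card_le _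
    _ ≤ p.natDegree := Polynomial.card_roots' p
    _ ≤ k := hdeg

lemma matCFF_poly {F : Type*} [Field F] [DecidableEq F] (k d : ℕ)
    (xs : Fin (d*k+1) ↪ F) :
    ∀ c₀ : (Fin (k+1) → F), ∀ S : Finset (Fin (k+1) → F), c₀ ∉ S → S.card ≤ d →
    ∃ r : Fin (d*k+1) × F, polyEval c₀ (xs r.1) = r.2 ∧
      ∀ c ∈ S, ¬ (polyEval c (xs r.1) = r.2) := by
  classical
  intro c₀ S hS hScard
  set B : (Fin (k+1) → F) → Finset (Fin (d*k+1)) :=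
    fun c => Finset.univ.filter (fun i => polyEval c (xs i) = polyEval c₀ (xs i)) with hBdef
  have hcard2 : (S.biUnion B).card ≤ d * k := by
    calc (S.biUnion B).card ≤ ∑ c ∈ S, (B c).card := Finset.card_biUnion_le
      _ ≤ ∑ _c ∈ S, k := Finset.sum_le_sum (fun c hc =>
          agree_card_le c c₀ (fun h => hS (h ▸ hc)) xs)
      _ = S.card * k := by rw [Finset.sum_const, smul_eq_mul]
      _ ≤ d * k := Nat.mul_le_mul_right k hScard
  have : ∃ i : Fin (d*k+1), i ∉ S.biUnion B := by
    by_contra h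
    push_neg at h
    have hsub : (Finset.univ : Finset (Fin (d*k+1))) ⊆ S.biUnion B := fun i _ => h i
    have := Finset.card_le_card hsub
    simp only [Finset.card_univ, Fintype.card_fin] at this
    omega
  obtain ⟨i, hi⟩ := this
  refine ⟨(i, polyEval c₀ (xs i)), rfl, ?_⟩
  intro c hc hceq
  exact hi (Finset.mem_biUnion.mpr ⟨c, hc, by simp [hBdef, hceq]⟩)

lemma embed_extend {E : Type*} [Fintype E] [DecidableEq E] {N N' : ℕ}
    (hNN' : N ≤ N') (hN' : N' ≤ Fintype.card E) (g : Fin N ↪ E) :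
    ∃ g' : Fin N' ↪ E, ∀ i : Fin N, g' (Fin.castLE hNN' i) = g i := by
  classical
  set M := N' - N with hM
  set T : Finset E := (Finset.univ.map g)ᶜ with hT
  have hTcard : M ≤ T.card := by
    rw [hT, Finset.card_compl, Finset.card_map, Finset.card_univ, Fintype.card_fin]
    omega
  have : Nonempty (Fin M ↪ {x // x ∈ T}) := by
    apply Function.Embedding.nonempty_of_card_le
    rwa [Fintype.card_fin, Fintype.card_coe]
  obtain ⟨h⟩ := this
  have hNM : N + M = N' := by omega
  set f : Fin N ⊕ Fin M → E := Sum.elim g (fun j => (h j : E)) with hf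
  have hfinj : Function.Injective f := by
    rintro (x | x) (y | y) hxy <;> simp only [hf, Sum.elim_inl, Sum.elim_inr] at hxy
    · exact congrArg Sum.inl (g.injective hxy)
    · exfalso
      have h1 : (h y : E) ∈ T := (h y).2
      have h2 : g x ∈ Finset.univ.map g := Finset.mem_map_of_mem g (Finset.mem_univ x)
      exact (Finset.mem_compl.mp h1) (hxy ▸ h2)
    · exfalso
      have h1 : (h x : E) ∈ T := (h x).2
      have h2 : g y ∈ Finset.univ.map g := Finset.mem_map_of_mem g (Finset.mem_univ y)
      exact (Finset.mem_compl.mp h1) (hxy ▸ h2)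
    · exact congrArg Sum.inr (h.injective (Subtype.val_injective hxy))
  refine ⟨⟨fun x => f (finSumFinEquiv.symm (finCongr hNM.symm x)), ?_⟩, ?_⟩
  · intro x y hxy
    have := hfinj hxy
    have := finSumFinEquiv.symm.injective this
    exact (finCongr hNM.symm).injective this
  · intro i
    have : finCongr hNM.symm (Fin.castLE hNN' i) = Fin.castAdd M i := by
      apply Fin.ext; simp
    show f (finSumFinEquiv.symm (finCongr hNM.symm (Fin.castLE hNN' i))) = g i
    simp only [this, finSumFinEquiv_symm_apply_castAdd]
    rfl

def sigmaMap {F E : Type*} [CommSemiring F] [CommSemiring E] {k k' : ℕ} (_hkk' : k ≤ k')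
    (φ : F →+* E) (c : Fin (k+1) → F) : Fin (k'+1) → E :=
  fun j => if h : (j:ℕ) < k+1 then φ (c ⟨j, h⟩) else 0

lemma sigmaMap_injective {F E : Type*} [CommSemiring F] [CommSemiring E] {k k' : ℕ}
    (hkk' : k ≤ k') (φ : F →+* E) (hφ : Function.Injective φ) :
    Function.Injective (sigmaMap hkk' φ (k := k) (k' := k')) := by
  intro c c' hcc
  funext i
  have := congrFun hcc (Fin.castLE (by omega) i)
  simp only [sigmaMap, Fin.coe_castLE, i.isLt, dif_pos, Fin.eta] at this
  exact hφ this

lemma sigmaMap_polyEval {F E : Type*} [CommSemiring F] [CommSemiring E] {k k' : ℕ}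
    (hkk' : k ≤ k') (φ : F →+* E) (c : Fin (k+1) → F) (x : F) :
    polyEval (sigmaMap hkk' φ c) (φ x) = φ (polyEval c x) := by
  have hle : k + 1 ≤ k' + 1 := by omega
  have step1 : polyEval (sigmaMap hkk' φ c) (φ x)
      = ∑ j ∈ Finset.univ.map (Fin.castLEEmb hle),
          sigmaMap hkk' φ c j * (φ x) ^ (j : ℕ) := by
    rw [polyEval]
    apply (Finset.sum_subset (Finset.subset_univ _) ?_).symm
    intro j _ hj
    have : ¬ ((j : ℕ) < k + 1) := by
      intro h
      exact hj (Finset.mem_map.mpr ⟨⟨(j:ℕ), h⟩, Finset.mem_univ _, by apply Fin.ext; simp⟩)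
    simp [sigmaMap, this]
  rw [step1, Finset.sum_map, polyEval, map_sum]
  apply Finset.sum_congr rfl
  intro i _
  simp [sigmaMap, Fin.castLEEmb, i.isLt, map_mul, map_pow]

theorem stmt4 (q k d k' d' : ℕ) (hq : IsPrimePow q)
    (hk : 1 ≤ k) (hd : 1 ≤ d) (hkk' : k ≤ k') (hdd' : d ≤ d')
    (hq1 : d * k + 1 ≤ q) (hq2 : d' * k' + 1 ≤ q ^ 2)
    (F E : Type*) [Field F] [Fintype F] [Field E] [Fintype E]
    (hF : Fintype.card F = q) (hE : Fintype.card E = q ^ 2)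
    (φ : F →+* E) (xs : Fin (d * k + 1) ↪ F) :
    -- the small matrix `C_{q,k,d}`
    let Msmall : (Fin (d * k + 1) × F) → (Fin (k + 1) → F) → Prop :=
      fun r c => polyEval c (xs r.1) = r.2
    MatCFF d Msmall ∧
    -- the big matrix `C_{q²,k',d'}` for a suitable choice of the `d'k'+1` fixed elements,
    -- contains `C_{q,k,d}` as a submatrix after row/column permutation
    ∃ xs' : Fin (d' * k' + 1) ↪ E,
      MatCFF d' (fun (r : Fin (d' * k' + 1) × E) (c : Fin (k' + 1) → E) =>
        polyEval c (xs' r.1) = r.2) ∧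
      ∃ (ρ : (Fin (d * k + 1) × F) → (Fin (d' * k' + 1) × E))
        (σ : (Fin (k + 1) → F) → (Fin (k' + 1) → E)),
        Function.Injective ρ ∧ Function.Injective σ ∧
        ∀ r c, (polyEval (σ c) (xs' (ρ r).1) = (ρ r).2) ↔ Msmall r c := by
  classical
  intro Msmall
  have hφ : Function.Injective φ := φ.injective
  constructor
  · intro c₀ S hS hScard
    exact matCFF_poly k d xs c₀ S hS hScard
  · have hNN' : d*k+1 ≤ d'*k'+1 := by
      have := Nat.mul_le_mul hdd' hkk'; omega
    have hN' : d'*k'+1 ≤ Fintype.card E := by rw [hE]; exact hq2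
    set g : Fin (d*k+1) ↪ E := xs.trans ⟨φ, hφ⟩ with hg
    obtain ⟨xs', hxs'⟩ := embed_extend hNN' hN' g
    refine ⟨xs', ?_, ?_⟩
    · intro c₀ S hS hScard
      exact matCFF_poly k' d' xs' c₀ S hS hScard
    · refine ⟨fun r => (Fin.castLE hNN' r.1, φ r.2), sigmaMap hkk' φ, ?_,
        sigmaMap_injective hkk' φ hφ, ?_⟩
      · intro r r' hrr
        obtain ⟨h1, h2⟩ := Prod.ext_iff.mp hrr
        exact Prod.ext (Fin.castLE_injective hNN' h1) (hφ h2)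
      · intro r c
        simp only
        rw [hxs' r.1]
        have hge : g r.1 = φ (xs r.1) := rfl
        rw [hge, sigmaMap_polyEval]
        exact ⟨fun h => hφ h, fun h => congrArg φ h⟩
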